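/- If F : C → D is an additive exact faithful functor between abelian categories admitting a left adjoint G, then the adjunction (G, F) is monadic, i.e., the comparison functor C → D^T for the monad T = F ∘ G is an equivalence of categories. -/

import Mathlib

/-
Copyright (c) 2020 Bhavik Mehta. All rights reserved.
Released under Apache 2.0 license as described in the file LICENSE.
Authors: Bhavik Mehta
-/

/-!
# Monadicity theorems

We prove monadicity theorems which can establish a given functor is monadic. In particular, we
show three versions of Beck's monadicity theorem, and the reflexive (crude) monadicity theorem:

`G` is a monadic right adjoint if it has a left adjoint, and:

* `D` has, `G` preserves and reflects `G`-split coequalizers, see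
  `CategoryTheory.Monad.monadicOfHasPreservesReflectsGSplitCoequalizers`
* `G` creates `G`-split coequalizers, see
  `CategoryTheory.Monad.monadicOfCreatesGSplitCoequalizers`
  (The converse of this is also shown, see
   `CategoryTheory.Monad.createsGSplitCoequalizersOfMonadic`)
* `D` has and `G` preserves `G`-split coequalizers, and `G` reflects isomorphisms, see
  `CategoryTheory.Monad.monadicOfHasPreservesGSplitCoequalizersOfReflectsIsomorphisms`
* `D` has and `G` preserves reflexive coequalizers, and `G` reflects isomorphisms, see
  `CategoryTheory.Monad.monadicOfHasPreservesReflexiveCoequalizersOfReflectsIsomorphisms`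

This file has been adapted to `Mathlib.CategoryTheory.Monad.Comonadicity`.
Please try to keep them in sync.

## Tags

Beck, monadicity, descent

-/

universe v₁ v₂ u₁ u₂

namespace CategoryTheory

namespace MyMonad
open Monad

open Limits

noncomputable section

-- Hide the implementation details in this namespace.
namespace MyMonadicityInternal

variable {C : Type u₁} {D : Type u₂}
variable [Category.{v₁} C] [Category.{v₂} D]
variable {G : D ⥤ C} {F : C ⥤ D} (adj : F ⊣ G)

/-- The "main pair" for an algebra `(A, α)` is the pair of morphisms `(F α, ε_FA)`. It is always a
reflexive pair, and will be used to construct the left adjoint to the comparison functor and show it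
is an equivalence.
-/
instance main_pair_reflexive (A : adj.toMonad.Algebra) :
    IsReflexivePair (F.map A.a) (adj.counit.app (F.obj A.A)) := by
  apply IsReflexivePair.mk' (F.map (adj.unit.app _)) _ _
  · erw [← F.map_comp, ← F.map_id]
    exact congr_arg F.map A.unit
  · erw [adj.left_triangle_components]

/-- The "main pair" for an algebra `(A, α)` is the pair of morphisms `(F α, ε_FA)`. It is always a
`G`-split pair, and will be used to construct the left adjoint to the comparison functor and show it
is an equivalence.
-/
instance main_pair_G_split (A : adj.toMonad.Algebra) :
    G.IsSplitPair (F.map A.a)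
      (adj.counit.app (F.obj A.A)) where
  splittable := ⟨_, _, ⟨beckSplitCoequalizer A⟩⟩

/-- The object function for the left adjoint to the comparison functor. -/
def comparisonLeftAdjointObj (A : adj.toMonad.Algebra)
    [HasCoequalizer (F.map A.a) (adj.counit.app _)] : D :=
  coequalizer (F.map A.a) (adj.counit.app _)

set_option linter.unusedVariables false in
/--
We have a bijection of homsets which will be used to construct the left adjoint to the comparison
functor.
-/
@[simps!]
def comparisonLeftAdjointHomEquiv (A : adj.toMonad.Algebra) (B : D)
    [HasCoequalizer (F.map A.a) (adj.counit.app (F.obj A.A))] :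
    (comparisonLeftAdjointObj adj A ⟶ B) ≃ (A ⟶ (comparison adj).obj B) :=
  calc
    (comparisonLeftAdjointObj adj A ⟶ B) ≃ { f : F.obj A.A ⟶ B // _ } :=
      Cofork.IsColimit.homIso (colimit.isColimit _) B
    _ ≃ { g : A.A ⟶ G.obj B // G.map (F.map g) ≫ G.map (adj.counit.app B) = A.a ≫ g } := by
      refine (adj.homEquiv _ _).subtypeEquiv ?_
      intro f
      rw [← (adj.homEquiv _ _).injective.eq_iff, Adjunction.homEquiv_naturality_left,
        adj.homEquiv_unit, adj.homEquiv_unit, Functor.map_comp]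
      dsimp
      erw [G.map_comp, adj.right_triangle_components_assoc, ← G.map_comp, Category.assoc,
        adj.counit_naturality, adj.left_triangle_components_assoc]
      apply eq_comm
    _ ≃ (A ⟶ (comparison adj).obj B) :=
      { toFun := fun g =>
          { f := _
            h := g.prop }
        invFun := fun f => ⟨f.f, f.h⟩
        left_inv := fun g => by ext; rfl
        right_inv := fun f => by ext; rfl }

/-- Construct the adjunction to the comparison functor.
-/
def leftAdjointComparison
    [∀ A : adj.toMonad.Algebra, HasCoequalizer (F.map A.a)
      (adj.counit.app (F.obj A.A))] :
    adj.toMonad.Algebra ⥤ D := by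
  refine
    Adjunction.leftAdjointOfEquiv (G := comparison adj)
      (F_obj := fun A => comparisonLeftAdjointObj adj A) (fun A B => ?_) ?_
  · apply comparisonLeftAdjointHomEquiv
  · intro A B B' g h
    ext1
    -- Porting note: the goal was previously closed by the following, which succeeds until
    -- `Category.assoc`.
    -- dsimp [comparisonLeftAdjointHomEquiv]
    -- rw [← adj.homEquiv_naturality_right, Category.assoc]
    simp [Cofork.IsColimit.homIso, Adjunction.homEquiv_unit, Trans.trans]
    exact (congrArg (adj.homEquiv _ _) (Category.assoc _ _ _).symm).trans (adj.homEquiv_naturality_right _ _)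

/-- Provided we have the appropriate coequalizers, we have an adjunction to the comparison functor.
-/
@[simps! counit]
def comparisonAdjunction
    [∀ A : adj.toMonad.Algebra, HasCoequalizer (F.map A.a)
      (adj.counit.app (F.obj A.A))] :
    leftAdjointComparison adj ⊣ comparison adj :=
  Adjunction.adjunctionOfEquivLeft _ _

variable {adj}

theorem comparisonAdjunction_unit_f_aux
    [∀ A : adj.toMonad.Algebra, HasCoequalizer (F.map A.a)
      (adj.counit.app (F.obj A.A))]
    (A : adj.toMonad.Algebra) :
    ((comparisonAdjunction adj).unit.app A).f =
      adj.homEquiv A.A _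
        (coequalizer.π (F.map A.a) (adj.counit.app (F.obj A.A))) :=
  congr_arg (adj.homEquiv _ _) (Category.comp_id _)

/-- This is a cofork which is helpful for establishing monadicity: the morphism from the Beck
coequalizer to this cofork is the unit for the adjunction on the comparison functor.
-/
@[simps! pt]
def unitCofork (A : adj.toMonad.Algebra)
    [HasCoequalizer (F.map A.a) (adj.counit.app (F.obj A.A))] :
    Cofork (G.map (F.map A.a)) (G.map (adj.counit.app (F.obj A.A))) :=
  Cofork.ofπ (G.map (coequalizer.π (F.map A.a) (adj.counit.app (F.obj A.A))))
    (by
      change _ = G.map _ ≫ _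
      erw [← G.map_comp, coequalizer.condition, G.map_comp])

@[simp]
theorem unitCofork_π (A : adj.toMonad.Algebra)
    [HasCoequalizer (F.map A.a) (adj.counit.app (F.obj A.A))] :
    (unitCofork A).π = G.map (coequalizer.π (F.map A.a) (adj.counit.app (F.obj A.A))) :=
  rfl

theorem comparisonAdjunction_unit_f
    [∀ A : adj.toMonad.Algebra, HasCoequalizer (F.map A.a)
      (adj.counit.app (F.obj A.A))]
    (A : adj.toMonad.Algebra) :
    ((comparisonAdjunction adj).unit.app A).f = (beckCoequalizer A).desc (unitCofork A) := by
  apply Limits.Cofork.IsColimit.hom_ext (beckCoequalizer A)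
  erw [Cofork.IsColimit.π_desc]
  dsimp only [beckCofork_π, unitCofork_π]
  erw [comparisonAdjunction_unit_f_aux, ← adj.homEquiv_naturality_left A.a, coequalizer.condition,
    adj.homEquiv_naturality_right, adj.homEquiv_unit, Category.assoc]
  apply adj.right_triangle_components_assoc

variable (adj)

/-- The cofork which describes the counit of the adjunction: the morphism from the coequalizer of
this pair to this morphism is the counit.
-/
@[simps!]
def counitCofork (B : D) :
    Cofork (F.map (G.map (adj.counit.app B)))
      (adj.counit.app (F.obj (G.obj B))) :=
  Cofork.ofπ (adj.counit.app B) (adj.counit_naturality _)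

variable {adj} in
/-- The unit cofork is a colimit provided `G` preserves it. -/
def unitColimitOfPreservesCoequalizer (A : adj.toMonad.Algebra)
    [HasCoequalizer (F.map A.a) (adj.counit.app (F.obj A.A))]
    [PreservesColimit (parallelPair (F.map A.a) (adj.counit.app (F.obj A.A))) G] :
    IsColimit (unitCofork (G := G) A) :=
  isColimitOfHasCoequalizerOfPreservesColimit G _ _

/-- The counit cofork is a colimit provided `G` reflects it. -/
def counitCoequalizerOfReflectsCoequalizer (B : D)
    [ReflectsColimit (parallelPair (F.map (G.map (adj.counit.app B)))
      (adj.counit.app (F.obj (G.obj B)))) G] :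
    IsColimit (counitCofork (adj := adj) B) :=
  isColimitOfIsColimitCoforkMap G _ (beckCoequalizer ((comparison adj).obj B))

-- Porting note: Lean 3 didn't seem to need this
instance
    [∀ A : adj.toMonad.Algebra, HasCoequalizer (F.map A.a) (adj.counit.app (F.obj A.A))]
    (B : D) : HasColimit (parallelPair
      (F.map (G.map (NatTrans.app adj.counit B)))
      (NatTrans.app adj.counit (F.obj (G.obj B)))) :=
  inferInstanceAs <| HasCoequalizer
    (F.map ((comparison adj).obj B).a)
    (adj.counit.app (F.obj ((comparison adj).obj B).A))

theorem comparisonAdjunction_counit_app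
    [∀ A : adj.toMonad.Algebra, HasCoequalizer (F.map A.a) (adj.counit.app (F.obj A.A))] (B : D) :
    (comparisonAdjunction adj).counit.app B = colimit.desc _ (counitCofork adj B) := by
  apply coequalizer.hom_ext
  change
    coequalizer.π (F.map ((comparison adj).obj B).a) (adj.counit.app (F.obj ((comparison adj).obj B).A)) ≫ coequalizer.desc ((adj.homEquiv _ B).symm (𝟙 _)) _ =
      coequalizer.π (F.map ((comparison adj).obj B).a) (adj.counit.app (F.obj ((comparison adj).obj B).A)) ≫ coequalizer.desc _ _
  simp [Adjunction.homEquiv_counit]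
  exact (adj.homEquiv_counit _ _ _).trans (by erw [F.map_id, Category.id_comp]; rfl)

end MyMonadicityInternal

open CategoryTheory Adjunction Monad MyMonadicityInternal

variable {C : Type u₁} {D : Type u₂}
variable [Category.{v₁} C] [Category.{v₂} D]
variable {G : D ⥤ C} {F : C ⥤ D} (adj : F ⊣ G)

variable (G) in
/--
If `G` is monadic, it creates colimits of `G`-split pairs. This is the "boring" direction of Beck's
monadicity theorem, the converse is given in `monadicOfCreatesGSplitCoequalizers`.
-/
def createsGSplitCoequalizersOfMonadic [MonadicRightAdjoint G] ⦃A B⦄ (f g : A ⟶ B)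
    [G.IsSplitPair f g] : CreatesColimit (parallelPair f g) G := by
  apply (config := {allowSynthFailures := true}) monadicCreatesColimitOfPreservesColimit
    -- Porting note: oddly (config := {allowSynthFailures := true}) had no effect here and below
  all_goals
    apply @preservesColimit_of_iso_diagram _ _ _ _ _ _ _ _ _ (diagramIsoParallelPair.{v₁} _).symm ?_
    dsimp
    infer_instance

section BeckMonadicity

-- Porting note: added these to replace parametric instances https://github.com/leanprover/lean4/issues/2311
-- When this is fixed the proofs below that struggle with instances should be reviewed.
-- [∀ ⦃A B⦄ (f g : A ⟶ B) [G.IsSplitPair f g], HasCoequalizer f g]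
class HasCoequalizerOfIsSplitPair (G : D ⥤ C) : Prop where
  out : ∀ {A B} (f g : A ⟶ B) [G.IsSplitPair f g], HasCoequalizer f g

-- Porting note: cannot find synth order
-- instance {A B} (f g : A ⟶ B) [G.IsSplitPair f g] [HasCoequalizerOfIsSplitPair G] :
--     HasCoequalizer f g := HasCoequalizerOfIsSplitPair.out f g

instance [HasCoequalizerOfIsSplitPair G] : ∀ (A : Algebra adj.toMonad),
    HasCoequalizer (F.map A.a)
      (adj.counit.app (F.obj A.A)) :=
  fun _ => HasCoequalizerOfIsSplitPair.out G _ _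

-- Porting note: added these to replace parametric instances https://github.com/leanprover/lean4/issues/2311
-- [∀ ⦃A B⦄ (f g : A ⟶ B) [G.IsSplitPair f g], PreservesColimit (parallelPair f g) G]
class PreservesColimitOfIsSplitPair (G : D ⥤ C) where
  out : ∀ {A B} (f g : A ⟶ B) [G.IsSplitPair f g], PreservesColimit (parallelPair f g) G

instance {A B} (f g : A ⟶ B) [G.IsSplitPair f g] [PreservesColimitOfIsSplitPair G] :
    PreservesColimit (parallelPair f g) G := PreservesColimitOfIsSplitPair.out f g

instance [PreservesColimitOfIsSplitPair G] : ∀ (A : Algebra adj.toMonad),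
   PreservesColimit (parallelPair (F.map A.a)
      (NatTrans.app adj.counit (F.obj A.A))) G :=
  fun _ => PreservesColimitOfIsSplitPair.out _ _

-- Porting note: added these to replace parametric instances https://github.com/leanprover/lean4/issues/2311
-- [∀ ⦃A B⦄ (f g : A ⟶ B) [G.IsSplitPair f g], ReflectsColimit (parallelPair f g) G] :
class ReflectsColimitOfIsSplitPair (G : D ⥤ C) where
  out : ∀ {A B} (f g : A ⟶ B) [G.IsSplitPair f g], ReflectsColimit (parallelPair f g) G

instance {A B} (f g : A ⟶ B) [G.IsSplitPair f g] [ReflectsColimitOfIsSplitPair G] :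
    ReflectsColimit (parallelPair f g) G := ReflectsColimitOfIsSplitPair.out f g

instance [ReflectsColimitOfIsSplitPair G] : ∀ (A : Algebra adj.toMonad),
    ReflectsColimit (parallelPair (F.map A.a)
      (NatTrans.app adj.counit (F.obj A.A))) G :=
  fun _ => ReflectsColimitOfIsSplitPair.out _ _

/-- To show `G` is a monadic right adjoint, we can show it preserves and reflects `G`-split
coequalizers, and `D` has them.
-/
def monadicOfHasPreservesReflectsGSplitCoequalizers [HasCoequalizerOfIsSplitPair G]
    [PreservesColimitOfIsSplitPair G] [ReflectsColimitOfIsSplitPair G] :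
    MonadicRightAdjoint G where
  L := F
  adj := adj
  eqv := by
    have : ∀ (X : Algebra adj.toMonad), IsIso ((comparisonAdjunction adj).unit.app X) := by
      intro X
      apply @isIso_of_reflects_iso _ _ _ _ _ _ _ (Monad.forget adj.toMonad) ?_ _
      · change IsIso ((comparisonAdjunction adj).unit.app X).f
        rw [comparisonAdjunction_unit_f]
        change
          IsIso
            (IsColimit.coconePointUniqueUpToIso (beckCoequalizer X)
                (unitColimitOfPreservesCoequalizer X)).hom
        exact (IsColimit.coconePointUniqueUpToIso _ _).isIso_hom
    have : ∀ (Y : D), IsIso ((comparisonAdjunction adj).counit.app Y) := by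
      intro Y
      rw [comparisonAdjunction_counit_app]
      -- Porting note: passing instances through
      change IsIso (IsColimit.coconePointUniqueUpToIso _ ?_).hom
      infer_instance
      -- Porting note: passing instances through
      apply @counitCoequalizerOfReflectsCoequalizer _ _ _ _ _ _ _ _ ?_
      letI _ :
        G.IsSplitPair (F.map (G.map (adj.counit.app Y)))
          (adj.counit.app (F.obj (G.obj Y))) :=
        MyMonadicityInternal.main_pair_G_split _ ((comparison adj).obj Y)
      infer_instance
    exact (comparisonAdjunction adj).toEquivalence.isEquivalence_inverse

-- Porting note: added these to replace parametric instances https://github.com/leanprover/lean4/issues/2311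
-- [∀ ⦃A B⦄ (f g : A ⟶ B) [G.IsSplitPair f g], CreatesColimit (parallelPair f g) G] :
class CreatesColimitOfIsSplitPair (G : D ⥤ C) where
  out : ∀ {A B} (f g : A ⟶ B) [G.IsSplitPair f g], CreatesColimit (parallelPair f g) G

instance {A B} (f g : A ⟶ B) [G.IsSplitPair f g] [CreatesColimitOfIsSplitPair G] :
    CreatesColimit (parallelPair f g) G := CreatesColimitOfIsSplitPair.out f g

instance [CreatesColimitOfIsSplitPair G] : ∀ (A : Algebra adj.toMonad),
    CreatesColimit (parallelPair (F.map A.a)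
      (NatTrans.app adj.counit (F.obj A.A))) G :=
  fun _ => CreatesColimitOfIsSplitPair.out _ _

/--
Beck's monadicity theorem. If `G` has a left adjoint and creates coequalizers of `G`-split pairs,
then it is monadic.
This is the converse of `createsGSplitCoequalizersOfMonadic`.
-/
def monadicOfCreatesGSplitCoequalizers [CreatesColimitOfIsSplitPair G] :
    MonadicRightAdjoint G := by
  let I {A B} (f g : A ⟶ B) [G.IsSplitPair f g] : HasColimit (parallelPair f g ⋙ G) := by
    apply @hasColimit_of_iso _ _ _ _ _ _ ?_ (diagramIsoParallelPair.{v₁} _)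
    exact inferInstanceAs <| HasCoequalizer (G.map f) (G.map g)
  have : HasCoequalizerOfIsSplitPair G := ⟨fun _ _ => hasColimit_of_created (parallelPair _ _) G⟩
  have : PreservesColimitOfIsSplitPair G := ⟨by intros; infer_instance⟩
  have : ReflectsColimitOfIsSplitPair G := ⟨by intros; infer_instance⟩
  exact monadicOfHasPreservesReflectsGSplitCoequalizers adj

/-- An alternate version of Beck's monadicity theorem. If `G` reflects isomorphisms, preserves
coequalizers of `G`-split pairs and `C` has coequalizers of `G`-split pairs, then it is monadic.
-/
def monadicOfHasPreservesGSplitCoequalizersOfReflectsIsomorphisms [G.ReflectsIsomorphisms]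
    [HasCoequalizerOfIsSplitPair G] [PreservesColimitOfIsSplitPair G] :
    MonadicRightAdjoint G := by
  have : ReflectsColimitOfIsSplitPair G := ⟨fun f g _ => by
    have := HasCoequalizerOfIsSplitPair.out G f g
    apply reflectsColimit_of_reflectsIsomorphisms⟩
  apply monadicOfHasPreservesReflectsGSplitCoequalizers adj

end BeckMonadicity

section ReflexiveMonadicity

variable [HasReflexiveCoequalizers D] [G.ReflectsIsomorphisms]

-- Porting note: added these to replace parametric instances https://github.com/leanprover/lean4/issues/2311
-- [∀ ⦃A B⦄ (f g : A ⟶ B) [G.IsReflexivePair f g], PreservesColimit (parallelPair f g) G] :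
class PreservesColimitOfIsReflexivePair (G : C ⥤ D) where
  out : ∀ ⦃A B⦄ (f g : A ⟶ B) [IsReflexivePair f g], PreservesColimit (parallelPair f g) G

instance {A B} (f g : A ⟶ B) [IsReflexivePair f g] [PreservesColimitOfIsReflexivePair G] :
  PreservesColimit (parallelPair f g) G := PreservesColimitOfIsReflexivePair.out f g

instance [PreservesColimitOfIsReflexivePair G] : ∀ X : Algebra adj.toMonad,
    PreservesColimit (parallelPair (F.map X.a)
      (NatTrans.app adj.counit (F.obj X.A))) G :=
 fun _ => PreservesColimitOfIsReflexivePair.out _ _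

variable [PreservesColimitOfIsReflexivePair G]

/-- Reflexive (crude) monadicity theorem. If `G` has a right adjoint, `D` has and `G` preserves
reflexive coequalizers and `G` reflects isomorphisms, then `G` is monadic.
-/
def monadicOfHasPreservesReflexiveCoequalizersOfReflectsIsomorphisms : MonadicRightAdjoint G where
  L := F
  adj := adj
  eqv := by
    have : ∀ A : adj.toMonad.Algebra, HasCoequalizer (F.map A.a) (adj.counit.app (F.obj A.A)) := fun A => by haveI := main_pair_reflexive adj A; exact HasReflexiveCoequalizers.has_coeq _ _
    have : ∀ (X : Algebra adj.toMonad), IsIso ((comparisonAdjunction adj).unit.app X) := by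
      intro X
      apply
        @isIso_of_reflects_iso _ _ _ _ _ _ _ (Monad.forget adj.toMonad) ?_ _
      · change IsIso ((comparisonAdjunction adj).unit.app X).f
        rw [comparisonAdjunction_unit_f]
        exact (IsColimit.coconePointUniqueUpToIso (beckCoequalizer X)
          (unitColimitOfPreservesCoequalizer X)).isIso_hom
    have : ∀ (Y : D), IsIso ((comparisonAdjunction adj).counit.app Y) := by
      intro Y
      rw [comparisonAdjunction_counit_app]
      -- Porting note: passing instances through
      change IsIso (IsColimit.coconePointUniqueUpToIso _ ?_).hom
      infer_instance
      -- Porting note: passing instances through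
      apply @counitCoequalizerOfReflectsCoequalizer _ _ _ _ _ _ _ _ ?_
      apply reflectsColimit_of_reflectsIsomorphisms
    exact (comparisonAdjunction adj).toEquivalence.isEquivalence_inverse

end ReflexiveMonadicity

end

end MyMonad

end CategoryTheory

open CategoryTheory

/-- If `F : C ⥤ D` is an additive exact faithful functor between abelian
categories admitting a left adjoint `G`, then the adjunction `(G, F)` is monadic: the
comparison functor `C ⥤ D^T` for the monad `T = F ∘ G` is an equivalence of categories. -/
theorem exact_faithful_is_monadic {C D : Type*} [Category C] [Category D]
    [Abelian C] [Abelian D]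
    (F : C ⥤ D) [F.Additive] [Limits.PreservesFiniteLimits F]
    [Limits.PreservesFiniteColimits F] [F.Faithful]
    (G : D ⥤ C) (adj : G ⊣ F) :
    (Monad.comparison adj).IsEquivalence := by
  have hrefl : F.ReflectsIsomorphisms := by
    constructor
    intro X Y f hf
    have hm : Mono f := F.mono_of_mono_map inferInstance
    have he : Epi f := F.epi_of_epi_map inferInstance
    exact isIso_of_mono_of_epi f
  have hpres : MyMonad.PreservesColimitOfIsReflexivePair F := by
    constructor
    intro A B f g _
    infer_instance
  exact (MyMonad.monadicOfHasPreservesReflexiveCoequalizersOfReflectsIsomorphisms adj).eqv
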